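/- Let A = (α_{ij})_{i,j∈[n]} be a real symmetric n × n matrix with α_{ii} = 0 for all i and α_{ij} > 0 for all i ≠ j, let α_max = max_{i,j} α_{ij}, and suppose that ∑_{1 ≤ i < j ≤ n} (α_max² − α_{ij}²) < α_max². Then there exist ℓ ≤ n(n−1)/2, regular simplices Δ_1, …, Δ_ℓ (each a finite set of points in some Euclidean space with all pairwise distances equal), and points z_1, …, z_n in the Cartesian product ∏_{l=1}^ℓ Δ_l such that {z_1, …, z_n} is affinely independent and ‖z_i − z_j‖ = α_{ij} for every i, j ∈ [n]. -/

import Mathlib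

open scoped Classical

noncomputable section

/-- The `j`-th vertex of a regular `m`-gon in the Euclidean plane with center `c`,
circumradius `r` and angle `θ`. -/
def polygonVertex (c : EuclideanSpace ℝ (Fin 2)) (r θ : ℝ) (m j : ℕ) :
    EuclideanSpace ℝ (Fin 2) :=
  (WithLp.equiv 2 (Fin 2 → ℝ)).symm
    ![c 0 + r * Real.cos (2 * Real.pi * j / m + θ),
      c 1 + r * Real.sin (2 * Real.pi * j / m + θ)]

/-- `T` is (the vertex set of) a regular `m`-gon of circumradius `r` in the plane. -/
def IsRegularPolygon (m : ℕ) (r : ℝ) (T : Set (EuclideanSpace ℝ (Fin 2))) : Prop :=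
  2 ≤ m ∧ 0 < r ∧
    ∃ (c : EuclideanSpace ℝ (Fin 2)) (θ : ℝ),
      T = {p | ∃ j < m, p = polygonVertex c r θ m j}

/-- The Cartesian product of `n` planar sets, viewed inside `ℝ^{2n}`. -/
def toriProduct {n : ℕ} (T : Fin n → Set (EuclideanSpace ℝ (Fin 2))) :
    Set (EuclideanSpace ℝ (Fin n × Fin 2)) :=
  {x | ∀ i : Fin n, ((WithLp.equiv 2 (Fin 2 → ℝ)).symm fun j => x (i, j)) ∈ T i}

lemma sum_Ioi_ite' {M : Type*} [AddCommMonoid M] (n : ℕ) (i : Fin n) (g : Fin n → M) :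
    (∑ j : Fin n, if i < j then g j else 0) = ∑ j ∈ Finset.Ioi i, g j := by
  rw [← Finset.sum_filter]
  congr 1
  ext j
  simp [Finset.mem_Ioi]

lemma sum_pairs' (n : ℕ) (f : Fin n → Fin n → ℝ) :
    ∑ p : {p : Fin n × Fin n // p.1 < p.2}, f p.1.1 p.1.2 = ∑ i, ∑ j ∈ Finset.Ioi i, f i j := by
  rw [← Finset.sum_subtype (Finset.univ.filter fun p : Fin n × Fin n => p.1 < p.2)
    (by simp) (fun p => f p.1 p.2)]
  rw [Finset.sum_filter, Fintype.sum_prod_type]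
  exact Finset.sum_congr rfl fun i _ => sum_Ioi_ite' n i (f i)

lemma card_pairs' (n : ℕ) :
    Fintype.card {p : Fin n × Fin n // p.1 < p.2} = n.choose 2 := by
  rw [Fintype.card_subtype, Finset.card_filter, Fintype.sum_prod_type]
  have h1 : ∀ i : Fin n, (∑ j : Fin n, if i < j then 1 else 0) = (Finset.Ioi i).card := by
    intro i
    rw [sum_Ioi_ite' n i (fun _ => 1)]
    simp
  simp_rw [h1, Fin.card_Ioi]
  rw [Fin.sum_univ_eq_sum_range (fun k => n - 1 - k), ← Finset.sum_range_reflect]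
  rw [Nat.choose_two_right, ← Finset.sum_range_id]
  apply Finset.sum_congr rfl
  intro k hk
  simp at hk
  omega

lemma norm_single_sub' {n : ℕ} (a b : Fin n) (h : a ≠ b) (r : ℝ) :
    ‖EuclideanSpace.single a r - EuclideanSpace.single b r‖ ^ 2 = 2 * r ^ 2 := by
  rw [EuclideanSpace.norm_eq, Real.sq_sqrt (by positivity)]
  have key : ∀ i : Fin n, ‖(EuclideanSpace.single a r - EuclideanSpace.single b r) i‖ ^ 2
      = (if i = a then r ^ 2 else 0) + (if i = b then r ^ 2 else 0) := by
    intro i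
    simp only [PiLp.sub_apply, EuclideanSpace.single_apply]
    by_cases hia : i = a <;> by_cases hib : i = b
    · exact absurd (hia ▸ hib) h
    all_goals simp [hia, hib, h, Ne.symm h, sq_abs]
  simp_rw [key]
  rw [Finset.sum_add_distrib, Finset.sum_ite_eq' Finset.univ a fun _ => r ^ 2,
    Finset.sum_ite_eq' Finset.univ b fun _ => r ^ 2]
  simp; ring

lemma single_index_inj {n : ℕ} {a b : Fin n} {r : ℝ} (hr : r ≠ 0)
    (h : (EuclideanSpace.single a r : EuclideanSpace ℝ (Fin n)) = EuclideanSpace.single b r) :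
    a = b := by
  by_contra hab
  have := congrArg (· a) h
  simp [EuclideanSpace.single_apply, hab, Ne.symm hab] at this
  exact hr this

lemma dist_of_sq_eq {X : Type*} [MetricSpace X] {x y : X} {a : ℝ}
    (h : dist x y ^ 2 = a ^ 2) (ha : 0 ≤ a) : dist x y = a := by
  rw [← Real.sqrt_sq dist_nonneg, h, Real.sqrt_sq ha]

lemma pilp_dist_sq {ℓ : ℕ} {d : Fin ℓ → ℕ}
    (x y : PiLp 2 fun l : Fin ℓ => EuclideanSpace ℝ (Fin (d l))) :
    dist x y ^ 2 = ∑ l, ‖x l - y l‖ ^ 2 := by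
  rw [dist_eq_norm, PiLp.norm_sq_eq_of_L2]
  apply Finset.sum_congr rfl
  intro l _
  rw [PiLp.sub_apply]

/-- An almost regular matrix is realized from an affinely independent subset of a
product of at most `n(n-1)/2` regular simplices. -/
theorem almost_regular_matrix_realized_in_product_of_regular_simplices
    (n : ℕ) (A : Fin n → Fin n → ℝ) (αmax : ℝ)
    (hsymm : ∀ i j, A i j = A j i)
    (hdiag : ∀ i, A i i = 0)
    (hpos : ∀ i j, i ≠ j → 0 < A i j)
    (hub : ∀ i j, A i j ≤ αmax)
    (hattained : ∃ i j, A i j = αmax)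
    (hsum : ∑ i : Fin n, ∑ j ∈ Finset.Ioi i, (αmax ^ 2 - A i j ^ 2) < αmax ^ 2) :
    ∃ (ℓ : ℕ) (_ : ℓ ≤ n.choose 2) (dims : Fin ℓ → ℕ)
      (Δ : (l : Fin ℓ) → Set (EuclideanSpace ℝ (Fin (dims l)))),
      (∀ l, (Δ l).Finite ∧ ∃ c > 0, (Δ l).Pairwise fun p q => dist p q = c) ∧
      ∃ z : Fin n → PiLp 2 fun l : Fin ℓ => EuclideanSpace ℝ (Fin (dims l)),
        (∀ i l, z i l ∈ Δ l) ∧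
        AffineIndependent ℝ z ∧
        ∀ i j, dist (z i) (z j) = A i j := by
  rcases Nat.lt_or_ge n 2 with hn | hn2
  · -- n ≤ 1 : trivial
    haveI : Subsingleton (Fin n) := by
      constructor; intro a b; omega
    refine ⟨0, Nat.zero_le _, Fin.elim0, fun l => l.elim0, fun l => l.elim0,
      fun _ => 0, fun i l => l.elim0, ?_, ?_⟩
    · exact affineIndependent_of_subsingleton ℝ _
    · intro i j
      have : i = j := Subsingleton.elim i j
      subst this
      simp [hdiag i]
  rcases Nat.lt_or_ge n 3 with hn2' | hn3
  · -- n = 2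
    have hn : n = 2 := by omega
    subst hn
    set α : ℝ := A 0 1 with hα
    have hαpos : 0 < α := hpos 0 1 (by decide)
    set r : ℝ := α / Real.sqrt 2 with hr
    have hrpos : 0 < r := by positivity
    have h2r : 2 * r ^ 2 = α ^ 2 := by
      rw [hr, div_pow, Real.sq_sqrt (by norm_num)]
      ring
    set q : Fin 2 → EuclideanSpace ℝ (Fin 2) := fun k => EuclideanSpace.single k r with hq
    refine ⟨1, by norm_num, fun _ => 2, fun _ => Set.range q, ?_, ?_⟩
    · intro l
      refine ⟨Set.finite_range q, α, hαpos, ?_⟩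
      rintro x ⟨a, rfl⟩ y ⟨b, rfl⟩ hxy
      have hab : a ≠ b := fun h => hxy (by rw [h])
      apply dist_of_sq_eq _ hαpos.le
      rw [dist_eq_norm, norm_single_sub' a b hab r, h2r]
    · set z : Fin 2 → PiLp 2 fun _ : Fin 1 => EuclideanSpace ℝ (Fin 2) :=
        fun k => (WithLp.equiv 2 _).symm fun _ => q k with hz
      have hzl : ∀ k l, z k l = q k := fun k l => rfl
      refine ⟨z, fun i l => ⟨i, rfl⟩, ?_, ?_⟩
      · rw [affineIndependent_iff]
        intro s w hw hsz m hm
        have hφ : ∀ x : PiLp 2 fun _ : Fin 1 => EuclideanSpace ℝ (Fin 2),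
            ((EuclideanSpace.proj m).comp (PiLp.proj 2 _ (0 : Fin 1))) x = x 0 m := fun x => rfl
        have h0 := congrArg ((EuclideanSpace.proj (𝕜 := ℝ) m).comp
          (PiLp.proj 2 (fun _ : Fin 1 => EuclideanSpace ℝ (Fin 2)) (0 : Fin 1))) hsz
        rw [map_sum, map_zero] at h0
        have h1 : ∀ k ∈ s, ((EuclideanSpace.proj (𝕜 := ℝ) m).comp
            (PiLp.proj 2 (fun _ : Fin 1 => EuclideanSpace ℝ (Fin 2)) (0 : Fin 1))) (w k • z k)
            = if k = m then w k * r else 0 := by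
          intro k _
          rw [map_smul]
          have : z k (0 : Fin 1) m = if m = k then r else 0 := by
            rw [hzl, hq]; exact EuclideanSpace.single_apply k r m
          simp only [smul_eq_mul, hφ, this]
          by_cases hkm : k = m
          · simp [hkm]
          · rw [if_neg (fun h => hkm h.symm), mul_zero, if_neg hkm]
        rw [Finset.sum_congr rfl h1, Finset.sum_ite_eq' s m (fun k => w k * r), if_pos hm] at h0
        exact (mul_eq_zero.1 h0).resolve_right hrpos.ne'
      · intro i j
        rcases eq_or_ne i j with rfl | hij
        · simp [hdiag i]
        · have hAij : A i j = α := by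
            fin_cases i <;> fin_cases j <;> simp at hij ⊢ <;> rw [hα] <;> exact hsymm _ _
          rw [hAij]
          apply dist_of_sq_eq _ hαpos.le
          rw [pilp_dist_sq]
          have : ∀ l : Fin 1, ‖z i l - z j l‖ ^ 2 = 2 * r ^ 2 := by
            intro l
            rw [hzl, hzl, hq]
            exact norm_single_sub' i j hij r
          simp only [this]
          rw [Finset.sum_const, h2r]
          simp
  · -- main case n ≥ 3
    have hcard : Fintype.card {p : Fin n × Fin n // p.1 < p.2} = n.choose 2 := card_pairs' n
    set N := n.choose 2 with hNdef
    have hN3 : 3 ≤ N := by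
      have h1 : Nat.choose 3 2 ≤ Nat.choose n 2 := Nat.choose_le_choose 2 hn3
      simpa using h1
    have hNsub : (0:ℝ) < (N:ℝ) - 1 := by
      have : (3:ℝ) ≤ (N:ℝ) := by exact_mod_cast hN3
      linarith
    set e : Fin N ≃ {p : Fin n × Fin n // p.1 < p.2} := (Fintype.equivFinOfCardEq hcard).symm
      with hedef
    set α : {p : Fin n × Fin n // p.1 < p.2} → ℝ := fun p => A p.1.1 p.1.2 with hαdef
    have hαpos : ∀ p, 0 < α p := fun p => hpos _ _ (ne_of_lt p.2)
    have hαle : ∀ p, α p ≤ αmax := fun p => hub _ _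
    have hmaxpos : 0 < αmax := by
      have h01 : (⟨0, by omega⟩ : Fin n) ≠ ⟨1, by omega⟩ := by
        intro h; simp [Fin.ext_iff] at h
      exact lt_of_lt_of_le (hpos _ _ h01) (hub _ _)
    have hsumP : ∑ p, (αmax ^ 2 - α p ^ 2) < αmax ^ 2 := by
      have := sum_pairs' n (fun i j => αmax ^ 2 - A i j ^ 2)
      rw [hαdef]
      rw [this]
      exact hsum
    set S : ℝ := (∑ p, α p ^ 2) / ((N:ℝ) - 1) with hSdef
    have hsum_sq : ((N:ℝ) - 1) * αmax ^ 2 < ∑ p, α p ^ 2 := by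
      have hconst : ∑ p, (αmax ^ 2 - α p ^ 2)
          = (N:ℝ) * αmax ^ 2 - ∑ p, α p ^ 2 := by
        rw [Finset.sum_sub_distrib, Finset.sum_const, Finset.card_univ, hcard]
        simp [nsmul_eq_mul]
      rw [hconst] at hsumP
      linarith
    have hSmax : αmax ^ 2 < S := by
      rw [hSdef, lt_div_iff₀ hNsub]
      linarith
    have hSα : ∀ p, α p ^ 2 < S := by
      intro p
      have : α p ^ 2 ≤ αmax ^ 2 := pow_le_pow_left₀ (hαpos p).le (hαle p) 2
      linarith
    have hSsum : ∑ p, (S - α p ^ 2) = S := by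
      rw [Finset.sum_sub_distrib, Finset.sum_const, Finset.card_univ, hcard, hSdef]
      have : ((N:ℝ) - 1) ≠ 0 := ne_of_gt hNsub
      rw [nsmul_eq_mul]
      field_simp
      ring
    set r : {p : Fin n × Fin n // p.1 < p.2} → ℝ :=
      fun p => Real.sqrt ((S - α p ^ 2) / 2) with hrdef
    have hrpos : ∀ p, 0 < r p := fun p => Real.sqrt_pos.2 (by linarith [hSα p])
    have h2r : ∀ p, 2 * r p ^ 2 = S - α p ^ 2 := by
      intro p
      rw [hrdef]
      rw [Real.sq_sqrt (by linarith [hSα p] : (0:ℝ) ≤ (S - α p ^ 2) / 2)]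
      ring
    set f : {p : Fin n × Fin n // p.1 < p.2} → Fin n → Fin n :=
      fun p k => if k = p.1.2 then p.1.1 else k with hfdef
    have hf_eq_iff : ∀ p (i j : Fin n), i ≠ j →
        (f p i = f p j ↔ (i = p.1.1 ∧ j = p.1.2) ∨ (j = p.1.1 ∧ i = p.1.2)) := by
      intro p i j hij
      have hne : p.1.1 ≠ p.1.2 := ne_of_lt p.2
      simp only [hfdef]
      split_ifs with h1 h2 h2
      · exact absurd (h1.trans h2.symm) hij
      · constructor
        · intro hh; exact Or.inr ⟨hh.symm, h1⟩
        · rintro (⟨hia, hjb⟩ | ⟨hja, hib⟩)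
          · exact absurd hjb h2
          · exact hja.symm
      · constructor
        · intro hh; exact Or.inl ⟨hh, h2⟩
        · rintro (⟨hia, hjb⟩ | ⟨hja, hib⟩)
          · exact hia
          · exact absurd hib h1
      · constructor
        · intro hh; exact absurd hh hij
        · rintro (⟨hia, hjb⟩ | ⟨hja, hib⟩)
          · exact absurd hjb h2
          · exact absurd hib h1
    have hself : ∀ p, f p p.1.1 = p.1.1 ∧ f p p.1.2 = p.1.1 := by
      intro p
      have hne : p.1.1 ≠ p.1.2 := ne_of_lt p.2
      constructor
      · simp [hfdef, hne]
      · simp [hfdef]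
    set q : (p : {p : Fin n × Fin n // p.1 < p.2}) → Fin n → EuclideanSpace ℝ (Fin n) :=
      fun p k => EuclideanSpace.single (f p k) (r p) with hqdef
    have hq_eq : ∀ p i j, f p i = f p j → q p i = q p j := by
      intro p i j h
      simp only [hqdef, h]
    have hnormsq : ∀ p (i j : Fin n),
        ‖q p i - q p j‖ ^ 2 = if f p i = f p j then 0 else S - α p ^ 2 := by
      intro p i j
      by_cases h : f p i = f p j
      · rw [if_pos h, hq_eq p i j h]
        simp
      · rw [if_neg h, ← h2r p]
        exact norm_single_sub' _ _ h (r p)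
    set z : Fin n → PiLp 2 fun _ : Fin N => EuclideanSpace ℝ (Fin n) :=
      fun k => (WithLp.equiv 2 _).symm fun l => q (e l) k with hzdef
    have hzl : ∀ k l, z k l = q (e l) k := fun k l => rfl
    refine ⟨N, le_rfl, fun _ => n, fun l => Set.range (q (e l)), ?_, z,
      fun i l => ⟨i, rfl⟩, ?_, ?_⟩
    · -- each Δ is a regular simplex
      intro l
      refine ⟨Set.finite_range _, Real.sqrt (S - α (e l) ^ 2), Real.sqrt_pos.2 (by
        linarith [hSα (e l)]), ?_⟩
      rintro x ⟨a, rfl⟩ y ⟨b, rfl⟩ hxy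
      have hfab : f (e l) a ≠ f (e l) b := fun h => hxy (hq_eq _ _ _ h)
      apply dist_of_sq_eq _ (Real.sqrt_nonneg _)
      rw [dist_eq_norm, Real.sq_sqrt (by linarith [hSα (e l)] : (0:ℝ) ≤ S - α (e l) ^ 2)]
      have := hnormsq (e l) a b
      rw [if_neg hfab] at this
      exact this
    · -- affine independence
      rw [affineIndependent_iff]
      intro s w hw hsz m hm
      obtain ⟨a, b, hab, ham, hbm⟩ : ∃ a b : Fin n, a < b ∧ a ≠ m ∧ b ≠ m := by
        by_cases h0 : m.val = 0
        · exact ⟨⟨1, by omega⟩, ⟨2, by omega⟩, by simp [Fin.lt_def],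
            fun h => by simp [Fin.ext_iff] at h; omega,
            fun h => by simp [Fin.ext_iff] at h; omega⟩
        · by_cases h1 : m.val = 1
          · exact ⟨⟨0, by omega⟩, ⟨2, by omega⟩, by simp [Fin.lt_def],
              fun h => by simp [Fin.ext_iff] at h; omega,
              fun h => by simp [Fin.ext_iff] at h; omega⟩
          · exact ⟨⟨0, by omega⟩, ⟨1, by omega⟩, by simp [Fin.lt_def],
              fun h => by simp [Fin.ext_iff] at h; omega,
              fun h => by simp [Fin.ext_iff] at h; omega⟩
      set p0 : {p : Fin n × Fin n // p.1 < p.2} := ⟨(a, b), hab⟩ with hp0def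
      set l0 := e.symm p0 with hl0def
      have hel0 : e l0 = p0 := e.apply_symm_apply p0
      have hfm : ∀ k : Fin n, f p0 k = m ↔ k = m := by
        intro k
        constructor
        · intro h
          simp only [hfdef, hp0def] at h
          by_cases hkb : k = b
          · rw [if_pos hkb] at h; exact absurd h ham
          · rwa [if_neg hkb] at h
        · intro h
          rw [h]
          simp only [hfdef, hp0def]
          rw [if_neg (fun hh : m = b => hbm hh.symm)]
      have h0 := congrArg ((EuclideanSpace.proj (𝕜 := ℝ) m).comp
        (PiLp.proj 2 (fun _ : Fin N => EuclideanSpace ℝ (Fin n)) l0)) hsz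
      rw [map_sum, map_zero] at h0
      have h1 : ∀ k ∈ s, ((EuclideanSpace.proj (𝕜 := ℝ) m).comp
          (PiLp.proj 2 (fun _ : Fin N => EuclideanSpace ℝ (Fin n)) l0)) (w k • z k)
          = if k = m then w k * r p0 else 0 := by
        intro k _
        rw [map_smul]
        have happ : ((EuclideanSpace.proj (𝕜 := ℝ) m).comp
            (PiLp.proj 2 (fun _ : Fin N => EuclideanSpace ℝ (Fin n)) l0)) (z k) = z k l0 m := rfl
        have hval : z k l0 m = if m = f p0 k then r p0 else 0 := by
          rw [hzl, hel0]
          simp only [hqdef]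
          exact EuclideanSpace.single_apply _ _ _
        simp only [smul_eq_mul, happ, hval]
        by_cases hkm : k = m
        · subst hkm
          rw [if_pos ((hfm k).2 rfl).symm, if_pos rfl]
        · rw [if_neg (fun hh : m = f p0 k => hkm ((hfm k).1 hh.symm)), mul_zero, if_neg hkm]
      rw [Finset.sum_congr rfl h1, Finset.sum_ite_eq' s m (fun k => w k * r p0), if_pos hm] at h0
      exact (mul_eq_zero.1 h0).resolve_right (hrpos p0).ne'
    · -- distances
      intro i j
      rcases eq_or_ne i j with rfl | hij
      · simp [hdiag i]
      · set pij : {p : Fin n × Fin n // p.1 < p.2} :=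
          if h : i < j then ⟨(i, j), h⟩ else ⟨(j, i), (hij.lt_or_gt.resolve_left h)⟩
          with hpijdef
        have hαpij : α pij = A i j := by
          rw [hpijdef]
          split_ifs with h
          · rfl
          · exact (hsymm i j).symm ▸ rfl
        have hpij_iff : ∀ p, f p i = f p j ↔ p = pij := by
          intro p
          rw [hf_eq_iff p i j hij]
          constructor
          · rintro (⟨hia, hjb⟩ | ⟨hja, hib⟩)
            · have hlt : i < j := by rw [hia, hjb]; exact p.2
              rw [hpijdef, dif_pos hlt]
              refine Subtype.ext ?_
              show (p : Fin n × Fin n) = (i, j)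
              rw [hia, hjb]
            · have hlt : j < i := by rw [hja, hib]; exact p.2
              rw [hpijdef, dif_neg (by omega : ¬ i < j)]
              refine Subtype.ext ?_
              show (p : Fin n × Fin n) = (j, i)
              rw [hja, hib]
          · rintro rfl
            rw [hpijdef]
            split_ifs with h
            · exact Or.inl ⟨rfl, rfl⟩
            · exact Or.inr ⟨rfl, rfl⟩
        apply dist_of_sq_eq _ (hpos i j hij).le
        rw [pilp_dist_sq]
        have hterm : ∀ l : Fin N, ‖z i l - z j l‖ ^ 2
            = if (e l) = pij then 0 else S - α (e l) ^ 2 := by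
          intro l
          rw [hzl, hzl, hnormsq]
          congr 1
          · rw [eq_iff_iff]; exact hpij_iff (e l)
        simp_rw [hterm]
        rw [Equiv.sum_comp e (fun p => if p = pij then (0:ℝ) else S - α p ^ 2)]
        have hsplit : ∀ p, (if p = pij then (0:ℝ) else S - α p ^ 2)
            = (S - α p ^ 2) - (if p = pij then S - α p ^ 2 else 0) := by
          intro p
          split_ifs with h
          · subst h; ring
          · ring
        simp_rw [hsplit]
        rw [Finset.sum_sub_distrib, hSsum,
          Finset.sum_ite_eq' Finset.univ pij (fun p => S - α p ^ 2)]
        rw [if_pos (Finset.mem_univ pij), hαpij]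
        ring
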